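/- (Front-door adjustment formula) In the four-node info-causal DAG with edges D → A, D → B, A → C, C → B, the info-intervention distribution of X_B satisfies P(x_B | σ(x̃_A)) = Σ_{x_C} P(x_C | x̃_A) Σ_{x_A} P(x_B | x_C, x_A) P(x_A), where all probabilities on the right involve only the observed variables A, B, C. -/
import Mathlib


open Finset

/-- Joint distribution of the front-door DAG `D → A`, `D → B`, `A → C`, `C → B`:
`P(a,b,c,d) = P(d) P(a|d) P(c|a) P(b|c,d)`. -/
noncomputable def frontJoint {α β γ δ : Type*} (pD : δ → ℝ) (pA : δ → α → ℝ)
    (pC : α → γ → ℝ) (pB : γ → δ → β → ℝ) (a : α) (b : β) (c : γ) (d : δ) : ℝ :=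
  pD d * pA d a * pC a c * pB c d b

/-- Front-door adjustment formula. In the front-door DAG,
`P(x_B | σ(x̃_A)) = Σ_{x_C} P(x_C | x̃_A) Σ_{x_A} P(x_B | x_C, x_A) P(x_A)`, where the
right-hand side involves only the observed variables `A, B, C` (conditionals and marginals
are ratios/sums of the observational joint). -/
theorem front_door {α β γ δ : Type*} [Fintype α] [Fintype β] [Fintype γ] [Fintype δ]
    (pD : δ → ℝ) (pA : δ → α → ℝ) (pC : α → γ → ℝ) (pB : γ → δ → β → ℝ)
    (hpD0 : ∀ d, 0 ≤ pD d) (hpA0 : ∀ d a, 0 ≤ pA d a)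
    (hpC0 : ∀ a c, 0 ≤ pC a c) (hpB0 : ∀ c d b, 0 ≤ pB c d b)
    (hpD1 : ∑ d, pD d = 1) (hpA1 : ∀ d, ∑ a, pA d a = 1)
    (hpC1 : ∀ a, ∑ c, pC a c = 1) (hpB1 : ∀ c d, ∑ b, pB c d b = 1)
    (xa : α) (xb : β)
    (hposA : ∀ a, 0 < ∑ b, ∑ c, ∑ d, frontJoint pD pA pC pB a b c d)
    (hposAC : ∀ a c, 0 < ∑ b, ∑ d, frontJoint pD pA pC pB a b c d) :
    -- P(x_B | σ(x̃_A))
    (∑ a, ∑ c, ∑ d, pD d * pA d a * pC xa c * pB c d xb)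
      = ∑ c, ((∑ b, ∑ d, frontJoint pD pA pC pB xa b c d)
              / (∑ b, ∑ c, ∑ d, frontJoint pD pA pC pB xa b c d))   -- P(x_C | x̃_A)
          * ∑ a, ((∑ d, frontJoint pD pA pC pB a xb c d)
                  / (∑ b, ∑ d, frontJoint pD pA pC pB a b c d))     -- P(x_B | x_C, x_A)
              * (∑ b, ∑ c, ∑ d, frontJoint pD pA pC pB a b c d)     -- P(x_A)
      := by
  -- abbreviations
  set M : α → ℝ := fun a => ∑ d, pD d * pA d a with hM
  set S : α → γ → ℝ := fun a c => ∑ d, pD d * pA d a * pB c d xb with hS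
  have key : ∀ a c, ∑ b, ∑ d, frontJoint pD pA pC pB a b c d = pC a c * M a := by
    intro a c
    rw [Finset.sum_comm, hM, Finset.mul_sum]
    refine Finset.sum_congr rfl fun d _ => ?_
    simp only [frontJoint]
    rw [← Finset.mul_sum, hpB1]
    ring
  have keyA : ∀ a, ∑ b, ∑ c, ∑ d, frontJoint pD pA pC pB a b c d = M a := by
    intro a
    rw [Finset.sum_comm]
    simp only [key]
    rw [← Finset.sum_mul, hpC1, one_mul]
  have keyS : ∀ a c, ∑ d, frontJoint pD pA pC pB a xb c d = pC a c * S a c := by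
    intro a c
    rw [hS, Finset.mul_sum]
    refine Finset.sum_congr rfl fun d _ => ?_
    simp only [frontJoint]; ring
  have hMpos : ∀ a, 0 < M a := fun a => keyA a ▸ hposA a
  have hpCMpos : ∀ a c, 0 < pC a c * M a := fun a c => key a c ▸ hposAC a c
  have hpCpos : ∀ a c, 0 < pC a c := by
    intro a c
    rcases (hpC0 a c).lt_or_eq with h | h
    · exact h
    · exfalso; have := hpCMpos a c; rw [← h, zero_mul] at this; exact lt_irrefl 0 this
  simp only [key, keyA, keyS]
  have hterm : ∀ a c, pC a c * S a c / (pC a c * M a) * M a = S a c := by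
    intro a c
    rw [mul_div_mul_left _ _ (hpCpos a c).ne', div_mul_cancel₀ _ (hMpos a).ne']
  simp only [hterm]
  have hfrac : ∀ c, pC xa c * M xa / M xa = pC xa c := by
    intro c
    rw [mul_div_assoc, div_self (hMpos xa).ne', mul_one]
  simp only [hfrac]
  rw [Finset.sum_comm]
  refine Finset.sum_congr rfl fun c _ => ?_
  rw [Finset.mul_sum]
  refine Finset.sum_congr rfl fun a _ => ?_
  rw [hS, Finset.mul_sum]
  exact Finset.sum_congr rfl fun d _ => by ring
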